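/- For a nested array feasibility region in the case (N+1)² > 4M: if N_in^l := ⌊((N−1) − √((N+1)²−4M))/2⌋ < 1, then the upper threshold N_in^u := ⌈((N−1) + √((N+1)²−4M))/2⌉ equals N − 1, so no integer N_in in {1, ..., N−2} is feasible. -/
import Mathlib

/-- If (N+1)² > 4M and the lower threshold
⌊((N-1) - √((N+1)²-4M))/2⌋ < 1, then the upper threshold
⌈((N-1) + √((N+1)²-4M))/2⌉ equals N - 1, so no N_in ∈ {1,...,N-2} is feasible. -/
theorem na_infeasible_case (M N : ℤ) (hN : 3 ≤ N) (hMN : N ≤ M)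
    (h : 4 * M < (N + 1) ^ 2)
    (hl : ⌊(((N : ℝ) - 1) - Real.sqrt (((N : ℝ) + 1) ^ 2 - 4 * M)) / 2⌋ < 1) :
    ⌈(((N : ℝ) - 1) + Real.sqrt (((N : ℝ) + 1) ^ 2 - 4 * M)) / 2⌉ = N - 1 := by
  have hN3 : (3:ℝ) ≤ (N:ℝ) := by exact_mod_cast hN
  have hMN' : (N:ℝ) ≤ (M:ℝ) := by exact_mod_cast hMN
  set s := Real.sqrt (((N : ℝ) + 1) ^ 2 - 4 * M) with hs
  have h1 : ((N:ℝ) - 1) - s < 2 := by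
    rw [Int.floor_lt] at hl
    push_cast at hl
    linarith
  have h2 : s ≤ (N:ℝ) - 1 := by
    have hle : ((N:ℝ)+1)^2 - 4*M ≤ ((N:ℝ)-1)^2 := by nlinarith
    calc s ≤ Real.sqrt (((N:ℝ)-1)^2) := Real.sqrt_le_sqrt hle
      _ = (N:ℝ) - 1 := Real.sqrt_sq (by linarith)
  rw [Int.ceil_eq_iff]
  constructor
  · push_cast
    linarith
  · push_cast
    linarith
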